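/- Let N : (0,1] → [0,∞) be defined by N(v) = a·c·∫_v^1 u^{-1}(1-u)^{c-1} du with a, c > 0 (the beta process tail intensity with σ = 0, up to normalization). Then for any ξ > 0, if N(v) = ξ then v ≤ exp((1 - ξ/a)/c); equivalently N^{-1}(ξ) ≤ e^{(1-ξ/a)/c}. -/

import Mathlib

open MeasureTheory Set

theorem beta_process_inverse_bound (a c : ℝ) (ha : 0 < a) (hc : 0 < c)
    (v : ℝ) (hv : v ∈ Set.Ioc (0:ℝ) 1) (ξ : ℝ) (hξ : 0 < ξ)
    (hN : a * c * ∫ u in Set.Ioo v 1, u⁻¹ * (1 - u) ^ (c - 1) = ξ) :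
    v ≤ Real.exp ((1 - ξ / a) / c) := by
  obtain ⟨hv0, hv1⟩ := hv
  -- integrability of (1-u)^(c-1) on v..1
  have h1 : IntervalIntegrable (fun u : ℝ => (1 - u) ^ (c - 1)) volume v 1 := by
    have := (intervalIntegral.intervalIntegrable_rpow' (a := 1 - v) (b := 1 - 1)
      (r := c - 1) (by linarith)).comp_sub_left 1
    simpa using this
  have hinv : ContinuousOn (fun u : ℝ => u⁻¹) (Set.uIcc v 1) := by
    apply ContinuousOn.inv₀ continuousOn_id
    intro x hx
    rw [Set.uIcc_of_le hv1] at hx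
    exact ne_of_gt (lt_of_lt_of_le hv0 hx.1)
  have h2 : IntervalIntegrable (fun u : ℝ => u⁻¹ * (1 - u) ^ (c - 1)) volume v 1 :=
    h1.continuousOn_mul hinv
  have h3 : IntervalIntegrable (fun u : ℝ => u⁻¹) volume v 1 := by
    exact hinv.intervalIntegrable
  have h4 : IntervalIntegrable (fun u : ℝ => (1 - u) ^ (c - 1) + u⁻¹) volume v 1 :=
    h1.add h3
  -- pointwise bound on Ioo v 1
  have hpt : ∀ u ∈ Set.Ioo v 1, u⁻¹ * (1 - u) ^ (c - 1) ≤ (1 - u) ^ (c - 1) + u⁻¹ := by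
    intro u hu
    have hu0 : 0 < u := lt_trans hv0 hu.1
    have h1u : 0 < 1 - u := by linarith [hu.2]
    have hle : (1 - u) ^ c ≤ 1 :=
      Real.rpow_le_one (le_of_lt h1u) (by linarith [hu.1, hv0]) (le_of_lt hc)
    have hc' : (1 - u) ^ (c - 1) * (1 - u) = (1 - u) ^ c := by
      rw [← Real.rpow_add_one (ne_of_gt h1u)]; ring_nf
    have key : u⁻¹ * (1 - u) ^ (c - 1) - (1 - u) ^ (c - 1) = (1 - u) ^ c * u⁻¹ := by
      rw [← hc']
      field_simp
    have : (1 - u) ^ c * u⁻¹ ≤ u⁻¹ := by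
      have := inv_pos.mpr hu0
      nlinarith
    linarith [key]
  -- integral inequality
  have hIoo1 : IntegrableOn (fun u : ℝ => u⁻¹ * (1 - u) ^ (c - 1)) (Set.Ioo v 1) volume := by
    exact h2.1.mono_set Set.Ioo_subset_Ioc_self
  have hIoo2 : IntegrableOn (fun u : ℝ => (1 - u) ^ (c - 1) + u⁻¹) (Set.Ioo v 1) volume := by
    exact h4.1.mono_set Set.Ioo_subset_Ioc_self
  have hmono : (∫ u in Set.Ioo v 1, u⁻¹ * (1 - u) ^ (c - 1)) ≤
      ∫ u in Set.Ioo v 1, ((1 - u) ^ (c - 1) + u⁻¹) :=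
    setIntegral_mono_on hIoo1 hIoo2 measurableSet_Ioo hpt
  -- compute the RHS integral
  have hconv : ∀ f : ℝ → ℝ, (∫ u in Set.Ioo v 1, f u) = ∫ u in v..1, f u := by
    intro f
    rw [intervalIntegral.integral_of_le hv1, MeasureTheory.integral_Ioc_eq_integral_Ioo]
  have hJ1 : (∫ u in v..1, (1 - u) ^ (c - 1)) = (1 - v) ^ c / c := by
    have := intervalIntegral.integral_comp_sub_left (a := v) (b := 1)
      (fun x : ℝ => x ^ (c - 1)) 1
    rw [this, show (1:ℝ) - 1 = 0 by norm_num, integral_rpow (Or.inl (by linarith)),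
      show c - 1 + 1 = c by ring, Real.zero_rpow hc.ne']
    ring
  have hJ2 : (∫ u in v..1, (u : ℝ)⁻¹) = - Real.log v := by
    rw [integral_inv (by rw [Set.uIcc_of_le hv1]; intro h; linarith [h.1])]
    rw [one_div, Real.log_inv]
  have hsum : (∫ u in v..1, ((1 - u) ^ (c - 1) + u⁻¹)) = (1 - v) ^ c / c - Real.log v := by
    rw [intervalIntegral.integral_add h1 h3, hJ1, hJ2]; ring
  have hbound : ξ ≤ a * ((1 - v) ^ c - c * Real.log v) := by
    rw [← hN]
    have := hmono
    rw [hconv (fun u => (1 - u) ^ (c - 1) + u⁻¹), hsum] at this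
    have hac : 0 < a * c := mul_pos ha hc
    calc a * c * ∫ u in Set.Ioo v 1, u⁻¹ * (1 - u) ^ (c - 1)
        ≤ a * c * ((1 - v) ^ c / c - Real.log v) := by
          exact mul_le_mul_of_nonneg_left this (le_of_lt hac)
      _ = a * ((1 - v) ^ c - c * Real.log v) := by field_simp
  have hpow : (1 - v) ^ c ≤ 1 := Real.rpow_le_one (by linarith) (by linarith) (le_of_lt hc)
  have hlog : Real.log v ≤ (1 - ξ / a) / c := by
    rw [le_div_iff₀ hc]
    have h6 : ξ / a ≤ 1 - c * Real.log v := by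
      rw [div_le_iff₀ ha]; nlinarith
    nlinarith
  calc v = Real.exp (Real.log v) := (Real.exp_log hv0).symm
    _ ≤ Real.exp ((1 - ξ / a) / c) := Real.exp_le_exp.mpr hlog
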